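/- arXiv:1001.1787 — 2 statements merged into one kernel-verified Lean document; each statement's English description precedes it below -/
import Mathlib

section
/- Let n ≥ 3, p > (n+2)/(n-2), and σ = 2/(p-1). Let w : ℝⁿ → ℝ satisfy 0 < w(x) ≤ C₀ (1+|x|)^{-2/(p-1)}, and define N(φ) = −(w+φ)^p + w^p + p w^{p-1} φ. Then there is a constant C > 0 such that for every function φ on ℝⁿ with w + φ ≥ 0 and ‖φ‖* < ∞, one has ‖N(φ)‖** ≤ C (‖φ‖*² + ‖φ‖*^p) if p ≥ 2, and ‖N(φ)‖** ≤ C ‖φ‖*^p if 1 < p < 2; in either case ‖N(φ)‖** ≤ C (‖φ‖*² + ‖φ‖*^p). -/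
open Set Filter Topology ENNReal

open scoped NNReal

/-- subadditivity-type estimate for rpow with exponent in [0,1] -/
lemma my_rpow_sub_le {x y q : ℝ} (hy : 0 ≤ y) (hxy : y ≤ x) (hq0 : 0 ≤ q) (hq1 : q ≤ 1) :
    x ^ q - y ^ q ≤ (x - y) ^ q := by
  have hd : 0 ≤ x - y := sub_nonneg.2 hxy
  have h := NNReal.rpow_add_le_add_rpow (x - y).toNNReal y.toNNReal hq0 hq1
  have hc : (x - y).toNNReal + y.toNNReal = x.toNNReal := by
    rw [← Real.toNNReal_add hd hy]; congr 1; ring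
  rw [hc] at h
  have h' : x ^ q ≤ (x - y) ^ q + y ^ q := by
    calc x ^ q = ((x.toNNReal : ℝ)) ^ q := by rw [Real.coe_toNNReal _ (hy.trans hxy)]
    _ = ((x.toNNReal ^ q : ℝ≥0) : ℝ) := (NNReal.coe_rpow _ _).symm
    _ ≤ (((x - y).toNNReal ^ q + y.toNNReal ^ q : ℝ≥0) : ℝ) := by exact_mod_cast h
    _ = (x - y) ^ q + y ^ q := by
        push_cast [NNReal.coe_rpow]
        rw [Real.coe_toNNReal _ hd, Real.coe_toNNReal _ hy]
  linarith

/-- shifted mean value theorem for rpow -/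
lemma my_mvt_rpow {p a t : ℝ} (hp : 1 ≤ p) (ha : 0 < a) (hat : 0 ≤ a + t) (ht : t ≠ 0) :
    ∃ ξ : ℝ, |ξ| ≤ |t| ∧ 0 < a + ξ ∧ (a + t) ^ p - a ^ p = p * (a + ξ) ^ (p - 1) * t := by
  have hcont : Continuous fun u : ℝ => (a + u) ^ p := by
    rw [continuous_iff_continuousAt]
    intro u
    exact (Real.continuousAt_rpow_const (a + u) p (Or.inr (by linarith))).comp
      (continuousAt_const.add continuousAt_id)
  have hderiv : ∀ u : ℝ, 0 < a + u →
      HasDerivAt (fun v : ℝ => (a + v) ^ p) (p * (a + u) ^ (p - 1)) u := by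
    intro u hu
    have h1 : HasDerivAt (fun v : ℝ => a + v) 1 u := (hasDerivAt_id u).const_add a
    have h2 := (Real.hasDerivAt_rpow_const (x := a + u) (p := p) (Or.inl hu.ne')).comp u h1
    simpa [Function.comp_def] using h2
  rcases ht.lt_or_gt with htn | htp
  · obtain ⟨c, hc, hceq⟩ := exists_hasDerivAt_eq_slope (fun v : ℝ => (a + v) ^ p)
      (fun u => p * (a + u) ^ (p - 1)) htn hcont.continuousOn
      (fun x hx => hderiv x (by have := hx.1; linarith))
    refine ⟨c, ?_, by have := hc.1; linarith, ?_⟩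
    · rw [abs_of_neg hc.2, abs_of_neg htn]; linarith [hc.1]
    · have h0 : (0:ℝ) - t ≠ 0 := by intro h; apply ht; linarith
      simp only [add_zero] at hceq
      rw [eq_div_iff h0] at hceq
      linear_combination hceq
  · obtain ⟨c, hc, hceq⟩ := exists_hasDerivAt_eq_slope (fun v : ℝ => (a + v) ^ p)
      (fun u => p * (a + u) ^ (p - 1)) htp hcont.continuousOn
      (fun x hx => hderiv x (by have := hx.1; linarith))
    refine ⟨c, ?_, by have := hc.1; linarith, ?_⟩
    · rw [abs_of_pos hc.1, abs_of_pos htp]; linarith [hc.2]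
    · have h0 : t - 0 ≠ 0 := by intro h; apply ht; linarith
      simp only [add_zero] at hceq
      rw [eq_div_iff h0] at hceq
      linear_combination -hceq

/-- Bernoulli / convexity lower bound -/
lemma my_bernoulli_shift {p a t : ℝ} (hp : 1 ≤ p) (ha : 0 < a) (hat : 0 ≤ a + t) :
    a ^ p + p * a ^ (p - 1) * t ≤ (a + t) ^ p := by
  have hs : -1 ≤ t / a := by rw [neg_le, ← neg_div, div_le_one ha]; linarith
  have h := one_add_mul_self_le_rpow_one_add hs hp
  have hap : (0:ℝ) < a ^ p := Real.rpow_pos_of_pos ha p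
  have key := mul_le_mul_of_nonneg_left h hap.le
  have h1 : a ^ p * (1 + t / a) ^ p = (a + t) ^ p := by
    rw [← Real.mul_rpow ha.le (by linarith)]
    congr 1
    field_simp
  have h2 : a ^ (p - 1) * a = a ^ p := by
    rw [← Real.rpow_add_one ha.ne' (p - 1)]; ring_nf
  have h3 : a ^ p * (1 + p * (t / a)) = a ^ p + p * a ^ (p - 1) * t := by
    rw [← h2]; field_simp
  rw [h1, h3] at key
  exact key

lemma my_key_lt2 {p a t : ℝ} (hp1 : 1 < p) (hp2 : p ≤ 2) (ha : 0 < a) (hat : 0 ≤ a + t) :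
    (a + t) ^ p - a ^ p - p * a ^ (p - 1) * t ≤ p * |t| ^ p := by
  rcases eq_or_ne t 0 with rfl | ht
  · simp [Real.zero_rpow (by positivity : p ≠ 0)]
  obtain ⟨ξ, hξt, hξ, heq⟩ := my_mvt_rpow hp1.le ha hat ht
  have hD : |(a + ξ) ^ (p - 1) - a ^ (p - 1)| ≤ |ξ| ^ (p - 1) := by
    rcases le_total a (a + ξ) with h | h
    · have h1 : a ^ (p-1) ≤ (a + ξ) ^ (p-1) := Real.rpow_le_rpow ha.le h (by linarith)
      rw [abs_of_nonneg (by linarith)]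
      have := my_rpow_sub_le ha.le h (by linarith : (0:ℝ) ≤ p - 1) (by linarith)
      have hξa : a + ξ - a = |ξ| := by rw [abs_of_nonneg (by linarith)]; ring
      rwa [hξa] at this
    · have h1 : (a + ξ) ^ (p-1) ≤ a ^ (p-1) := Real.rpow_le_rpow hξ.le h (by linarith)
      rw [abs_of_nonpos (by linarith)]
      have := my_rpow_sub_le hξ.le h (by linarith : (0:ℝ) ≤ p - 1) (by linarith)
      have hξa : a - (a + ξ) = |ξ| := by rw [abs_of_nonpos (by linarith)]; ring
      rw [hξa] at this; linarith
  have hξp : |ξ| ^ (p - 1) ≤ |t| ^ (p - 1) := Real.rpow_le_rpow (abs_nonneg _) hξt (by linarith)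
  have hLHS : (a + t) ^ p - a ^ p - p * a ^ (p - 1) * t
      = p * ((a + ξ) ^ (p - 1) - a ^ (p - 1)) * t := by rw [heq]; ring
  calc (a + t) ^ p - a ^ p - p * a ^ (p - 1) * t
      ≤ |p * ((a + ξ) ^ (p - 1) - a ^ (p - 1)) * t| := by rw [hLHS]; exact le_abs_self _
    _ = p * |(a + ξ) ^ (p - 1) - a ^ (p - 1)| * |t| := by
        rw [abs_mul, abs_mul, abs_of_pos (by linarith : (0:ℝ) < p)]
    _ ≤ p * |t| ^ (p - 1) * |t| :=
        mul_le_mul_of_nonneg_right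
          (mul_le_mul_of_nonneg_left (hD.trans hξp) (by linarith : (0:ℝ) ≤ p)) (abs_nonneg t)
    _ = p * |t| ^ p := by
        rw [mul_assoc, ← Real.rpow_add_one (abs_ne_zero.2 ht) (p-1)]
        have hpe : p - 1 + 1 = p := by ring
        rw [hpe]

lemma my_key_ge2 {p a t : ℝ} (hp : 2 ≤ p) (ha : 0 < a) (hat : 0 ≤ a + t) :
    (a + t) ^ p - a ^ p - p * a ^ (p - 1) * t
      ≤ p * (p - 1) * 2 ^ p * (a ^ (p - 2) * t ^ 2 + |t| ^ p) := by
  have hppos : (0:ℝ) < p := by linarith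
  have hRHS : 0 ≤ p * (p - 1) * 2 ^ p * (a ^ (p - 2) * t ^ 2 + |t| ^ p) := by
    have h1 : (0:ℝ) ≤ a ^ (p - 2) := (Real.rpow_pos_of_pos ha _).le
    have h2 : (0:ℝ) < 2 ^ p := Real.rpow_pos_of_pos (by norm_num) p
    have h3 : (0:ℝ) ≤ |t| ^ p := Real.rpow_nonneg (abs_nonneg t) p
    exact mul_nonneg (mul_nonneg (mul_nonneg (by linarith) (by linarith)) h2.le)
      (add_nonneg (mul_nonneg h1 (sq_nonneg t)) h3)
  rcases eq_or_ne t 0 with rfl | ht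
  · simp only [add_zero, mul_zero, sub_zero, sub_self]
    exact hRHS
  obtain ⟨ξ, hξt, hξ, heq⟩ := my_mvt_rpow (by linarith : (1:ℝ) ≤ p) ha hat ht
  rcases eq_or_ne ξ 0 with rfl | hξ0
  · have : (a + t) ^ p - a ^ p - p * a ^ (p - 1) * t = 0 := by
      rw [heq]; simp
    linarith
  obtain ⟨η, hηξ, hη, heq2⟩ := my_mvt_rpow (p := p - 1) (by linarith : (1:ℝ) ≤ p - 1) ha hξ.le hξ0
  have hp2 : p - 1 - 1 = p - 2 := by ring
  rw [hp2] at heq2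
  have hLHS : (a + t) ^ p - a ^ p - p * a ^ (p - 1) * t
      = p * ((p - 1) * (a + η) ^ (p - 2) * ξ) * t := by
        linear_combination heq + p * t * heq2
  have hbound : (a + η) ^ (p - 2) ≤ 2 ^ p * (a ^ (p - 2) + |t| ^ (p - 2)) := by
    have h1 : a + η ≤ a + |t| := by
      have : η ≤ |η| := le_abs_self η
      have : |η| ≤ |t| := hηξ.trans hξt
      linarith [le_abs_self η, hηξ.trans hξt]
    have h2 : a + |t| ≤ 2 * max a |t| := by
      rcases le_total a |t| with h | h
      · simp [max_eq_right h]; linarith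
      · simp [max_eq_left h]; linarith
    have h3 : (a + η) ^ (p - 2) ≤ (2 * max a |t|) ^ (p - 2) :=
      Real.rpow_le_rpow hη.le (h1.trans h2) (by linarith)
    have h4 : (2 * max a |t|) ^ (p - 2) = 2 ^ (p - 2) * (max a |t|) ^ (p - 2) :=
      Real.mul_rpow (by norm_num) (le_max_of_le_left ha.le)
    have h5 : (max a |t|) ^ (p - 2) ≤ a ^ (p - 2) + |t| ^ (p - 2) := by
      rcases max_cases a |t| with ⟨hm, _⟩ | ⟨hm, _⟩ <;> rw [hm]
      · nlinarith [Real.rpow_nonneg (abs_nonneg t) (p - 2)]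
      · nlinarith [(Real.rpow_pos_of_pos ha (p - 2)).le]
    have h6 : (2:ℝ) ^ (p - 2) ≤ 2 ^ p :=
      Real.rpow_le_rpow_of_exponent_le (by norm_num) (by linarith)
    have h7 : (0:ℝ) ≤ (max a |t|) ^ (p - 2) := Real.rpow_nonneg (le_max_of_le_left ha.le) _
    have h8 : (0:ℝ) ≤ a ^ (p - 2) + |t| ^ (p - 2) := by
      nlinarith [(Real.rpow_pos_of_pos ha (p - 2)).le, Real.rpow_nonneg (abs_nonneg t) (p - 2)]
    calc (a + η) ^ (p - 2) ≤ 2 ^ (p - 2) * (max a |t|) ^ (p - 2) := by rw [← h4]; exact h3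
      _ ≤ 2 ^ (p - 2) * (a ^ (p - 2) + |t| ^ (p - 2)) := by
          have : (0:ℝ) < 2 ^ (p - 2) := Real.rpow_pos_of_pos (by norm_num) _
          nlinarith
      _ ≤ 2 ^ p * (a ^ (p - 2) + |t| ^ (p - 2)) := by nlinarith
  have htp : |t| ^ (p - 2) * t ^ 2 = |t| ^ p := by
    rw [← sq_abs t, ← Real.rpow_natCast |t| 2, ← Real.rpow_add (abs_pos.2 ht)]
    norm_num
  calc (a + t) ^ p - a ^ p - p * a ^ (p - 1) * t
      ≤ |p * ((p - 1) * (a + η) ^ (p - 2) * ξ) * t| := by rw [hLHS]; exact le_abs_self _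
    _ = p * (p - 1) * (a + η) ^ (p - 2) * (|ξ| * |t|) := by
        rw [abs_mul, abs_mul, abs_mul, abs_mul,
          abs_of_pos hppos, abs_of_pos (by linarith : (0:ℝ) < p - 1),
          abs_of_pos (Real.rpow_pos_of_pos hη _)]
        ring
    _ ≤ p * (p - 1) * (a + η) ^ (p - 2) * t ^ 2 := by
        have h9 : |ξ| * |t| ≤ t ^ 2 := by
          rw [← sq_abs t, sq]
          exact mul_le_mul_of_nonneg_right hξt (abs_nonneg t)
        have h10 : (0:ℝ) ≤ p * (p - 1) * (a + η) ^ (p - 2) :=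
          mul_nonneg (mul_nonneg (by linarith) (by linarith)) (Real.rpow_pos_of_pos hη _).le
        exact mul_le_mul_of_nonneg_left h9 h10
    _ ≤ p * (p - 1) * (2 ^ p * (a ^ (p - 2) + |t| ^ (p - 2))) * t ^ 2 :=
        mul_le_mul_of_nonneg_right
          (mul_le_mul_of_nonneg_left hbound
            (mul_nonneg (by linarith : (0:ℝ) ≤ p) (by linarith : (0:ℝ) ≤ p - 1)))
          (sq_nonneg t)
    _ = p * (p - 1) * 2 ^ p * (a ^ (p - 2) * t ^ 2 + |t| ^ (p - 2) * t ^ 2) := by ring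
    _ = p * (p - 1) * 2 ^ p * (a ^ (p - 2) * t ^ 2 + |t| ^ p) := by rw [htp]

lemma my_main_pt {p C₀ a t r m : ℝ} (h1p : 1 < p) (hC₀ : 0 < C₀) (ha : 0 < a)
    (haC : a ≤ C₀ * (1 + r) ^ (-(2 / (p - 1)))) (hat : 0 ≤ a + t) (hr : 0 < r) (hm : 0 ≤ m)
    (hb : |t| ≤ m * r ^ (-(2 / (p - 1)))) :
    (2 ≤ p → r ^ (2 + 2 / (p - 1)) * ((a + t) ^ p - a ^ p - p * a ^ (p - 1) * t)
        ≤ ((p * (p - 1) * 2 ^ p + p) * (1 + C₀ ^ (p - 2))) * (m ^ 2 + m ^ p))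
    ∧ (p ≤ 2 → r ^ (2 + 2 / (p - 1)) * ((a + t) ^ p - a ^ p - p * a ^ (p - 1) * t)
        ≤ ((p * (p - 1) * 2 ^ p + p) * (1 + C₀ ^ (p - 2))) * m ^ p) := by
  have hp1 : (0:ℝ) < p - 1 := by linarith
  set σ : ℝ := 2 / (p - 1) with hσdef
  have hσ : 0 < σ := by positivity
  have hσp : σ * (p - 1) = 2 := by rw [hσdef]; field_simp
  have h2p : (0:ℝ) < 2 ^ p := Real.rpow_pos_of_pos (by norm_num) p
  have hC₀p : (0:ℝ) < C₀ ^ (p - 2) := Real.rpow_pos_of_pos hC₀ _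
  have hwt : (0:ℝ) ≤ r ^ (2 + σ) := (Real.rpow_pos_of_pos hr _).le
  have hmp : (0:ℝ) ≤ m ^ p := Real.rpow_nonneg hm p
  -- second term estimate
  have hS2 : r ^ (2 + σ) * |t| ^ p ≤ m ^ p := by
    have h1 : |t| ^ p ≤ (m * r ^ (-σ)) ^ p :=
      Real.rpow_le_rpow (abs_nonneg _) hb (by linarith)
    have h2 : (m * r ^ (-σ)) ^ p = m ^ p * r ^ (-σ * p) := by
      rw [Real.mul_rpow hm (Real.rpow_nonneg hr.le _), ← Real.rpow_mul hr.le]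
    have h3 : r ^ (2 + σ) * r ^ (-σ * p) = 1 := by
      rw [← Real.rpow_add hr]
      have he : 2 + σ + -σ * p = 0 := by linear_combination -hσp
      rw [he, Real.rpow_zero]
    calc r ^ (2 + σ) * |t| ^ p ≤ r ^ (2 + σ) * (m ^ p * r ^ (-σ * p)) := by
          rw [h2] at h1
          exact mul_le_mul_of_nonneg_left h1 hwt
      _ = m ^ p * (r ^ (2 + σ) * r ^ (-σ * p)) := by ring
      _ = m ^ p := by rw [h3, mul_one]
  constructor
  · -- case 2 ≤ p
    intro hp2
    have hS1 : r ^ (2 + σ) * (a ^ (p - 2) * t ^ 2) ≤ C₀ ^ (p - 2) * m ^ 2 := by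
      have hw2 : a ^ (p - 2) ≤ C₀ ^ (p - 2) * (1 + r) ^ (-σ * (p - 2)) := by
        have h1 : a ^ (p - 2) ≤ (C₀ * (1 + r) ^ (-σ)) ^ (p - 2) :=
          Real.rpow_le_rpow ha.le haC (by linarith)
        rwa [Real.mul_rpow hC₀.le (Real.rpow_nonneg (by positivity) _),
          ← Real.rpow_mul (by positivity : (0:ℝ) ≤ 1 + r)] at h1
      have hφ2 : t ^ 2 ≤ m ^ 2 * r ^ (-(2 * σ)) := by
        have h2 : |t| ^ 2 ≤ (m * r ^ (-σ)) ^ 2 := by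
          have h0 : (0:ℝ) ≤ m * r ^ (-σ) := mul_nonneg hm (Real.rpow_nonneg hr.le _)
          nlinarith [abs_nonneg t]
        have h3 : (m * r ^ (-σ)) ^ 2 = m ^ 2 * r ^ (-(2 * σ)) := by
          have he : r ^ (-σ) * r ^ (-σ) = r ^ (-(2 * σ)) := by
            rw [← Real.rpow_add hr]; ring_nf
          calc (m * r ^ (-σ)) ^ 2 = m ^ 2 * (r ^ (-σ) * r ^ (-σ)) := by ring
            _ = m ^ 2 * r ^ (-(2 * σ)) := by rw [he]
        calc t ^ 2 = |t| ^ 2 := (sq_abs t).symm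
          _ ≤ (m * r ^ (-σ)) ^ 2 := h2
          _ = m ^ 2 * r ^ (-(2 * σ)) := h3
      have hσ2 : σ ≤ 2 := by nlinarith
      have hkey : r ^ (2 + σ) * ((1 + r) ^ (-σ * (p - 2)) * r ^ (-(2 * σ))) ≤ 1 := by
        have e1 : r ^ (2 + σ) * r ^ (-(2 * σ)) = r ^ (2 - σ) := by
          rw [← Real.rpow_add hr]; ring_nf
        have e2 : r ^ (2 - σ) ≤ (1 + r) ^ (2 - σ) :=
          Real.rpow_le_rpow hr.le (by linarith) (by linarith)
        have e3 : (1 + r) ^ (2 - σ) * (1 + r) ^ (-σ * (p - 2)) = 1 := by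
          rw [← Real.rpow_add (by positivity : (0:ℝ) < 1 + r)]
          have he : 2 - σ + -σ * (p - 2) = 0 := by linear_combination -hσp
          rw [he, Real.rpow_zero]
        have e4 : (0:ℝ) ≤ (1 + r) ^ (-σ * (p - 2)) := Real.rpow_nonneg (by positivity) _
        calc r ^ (2 + σ) * ((1 + r) ^ (-σ * (p - 2)) * r ^ (-(2 * σ)))
            = (r ^ (2 + σ) * r ^ (-(2 * σ))) * (1 + r) ^ (-σ * (p - 2)) := by ring
          _ = r ^ (2 - σ) * (1 + r) ^ (-σ * (p - 2)) := by rw [e1]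
          _ ≤ (1 + r) ^ (2 - σ) * (1 + r) ^ (-σ * (p - 2)) :=
              mul_le_mul_of_nonneg_right e2 e4
          _ = 1 := e3
      have hprod : a ^ (p - 2) * t ^ 2
          ≤ (C₀ ^ (p - 2) * m ^ 2) * ((1 + r) ^ (-σ * (p - 2)) * r ^ (-(2 * σ))) := by
        have hap : (0:ℝ) ≤ a ^ (p - 2) := (Real.rpow_pos_of_pos ha _).le
        have hbp : (0:ℝ) ≤ C₀ ^ (p - 2) * (1 + r) ^ (-σ * (p - 2)) :=
          mul_nonneg hC₀p.le (Real.rpow_nonneg (by positivity) _)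
        calc a ^ (p - 2) * t ^ 2
            ≤ (C₀ ^ (p - 2) * (1 + r) ^ (-σ * (p - 2))) * t ^ 2 :=
              mul_le_mul_of_nonneg_right hw2 (sq_nonneg t)
          _ ≤ (C₀ ^ (p - 2) * (1 + r) ^ (-σ * (p - 2))) * (m ^ 2 * r ^ (-(2 * σ))) :=
              mul_le_mul_of_nonneg_left hφ2 hbp
          _ = (C₀ ^ (p - 2) * m ^ 2) * ((1 + r) ^ (-σ * (p - 2)) * r ^ (-(2 * σ))) := by ring
      have hcm : (0:ℝ) ≤ C₀ ^ (p - 2) * m ^ 2 := mul_nonneg hC₀p.le (sq_nonneg m)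
      calc r ^ (2 + σ) * (a ^ (p - 2) * t ^ 2)
          ≤ r ^ (2 + σ) * ((C₀ ^ (p - 2) * m ^ 2) * ((1 + r) ^ (-σ * (p - 2)) * r ^ (-(2 * σ)))) :=
            mul_le_mul_of_nonneg_left hprod hwt
        _ = (C₀ ^ (p - 2) * m ^ 2) * (r ^ (2 + σ) * ((1 + r) ^ (-σ * (p - 2)) * r ^ (-(2 * σ)))) := by
            ring
        _ ≤ (C₀ ^ (p - 2) * m ^ 2) * 1 := mul_le_mul_of_nonneg_left hkey hcm
        _ = C₀ ^ (p - 2) * m ^ 2 := mul_one _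
    have hkey2 := my_key_ge2 hp2 ha hat
    have step := mul_le_mul_of_nonneg_left hkey2 hwt
    calc r ^ (2 + σ) * ((a + t) ^ p - a ^ p - p * a ^ (p - 1) * t)
        ≤ r ^ (2 + σ) * (p * (p - 1) * 2 ^ p * (a ^ (p - 2) * t ^ 2 + |t| ^ p)) := step
      _ = p * (p - 1) * 2 ^ p *
          (r ^ (2 + σ) * (a ^ (p - 2) * t ^ 2) + r ^ (2 + σ) * |t| ^ p) := by ring
      _ ≤ p * (p - 1) * 2 ^ p * (C₀ ^ (p - 2) * m ^ 2 + m ^ p) := by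
          have hK : (0:ℝ) ≤ p * (p - 1) * 2 ^ p :=
            mul_nonneg (mul_nonneg (by linarith) (by linarith)) h2p.le
          exact mul_le_mul_of_nonneg_left (add_le_add hS1 hS2) hK
      _ ≤ ((p * (p - 1) * 2 ^ p + p) * (1 + C₀ ^ (p - 2))) * (m ^ 2 + m ^ p) := by
          nlinarith [mul_nonneg (mul_nonneg (mul_nonneg (by linarith : (0:ℝ) ≤ p)
              (by linarith : (0:ℝ) ≤ p - 1)) h2p.le) hmp,
            mul_nonneg (mul_nonneg (mul_nonneg (mul_nonneg (by linarith : (0:ℝ) ≤ p)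
              (by linarith : (0:ℝ) ≤ p - 1)) h2p.le) hC₀p.le) hmp,
            mul_nonneg (mul_nonneg (by linarith : (0:ℝ) ≤ p) hC₀p.le) hmp,
            mul_nonneg (mul_nonneg (by linarith : (0:ℝ) ≤ p) hC₀p.le) (sq_nonneg m),
            mul_nonneg (by linarith : (0:ℝ) ≤ p) (sq_nonneg m),
            mul_nonneg (by linarith : (0:ℝ) ≤ p) hmp,
            mul_nonneg (mul_nonneg (mul_nonneg (by linarith : (0:ℝ) ≤ p)
              (by linarith : (0:ℝ) ≤ p - 1)) h2p.le) (sq_nonneg m)]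
  · -- case p ≤ 2
    intro hp2
    have hkey1 := my_key_lt2 h1p hp2 ha hat
    have step := mul_le_mul_of_nonneg_left hkey1 hwt
    calc r ^ (2 + σ) * ((a + t) ^ p - a ^ p - p * a ^ (p - 1) * t)
        ≤ r ^ (2 + σ) * (p * |t| ^ p) := step
      _ = p * (r ^ (2 + σ) * |t| ^ p) := by ring
      _ ≤ p * m ^ p := mul_le_mul_of_nonneg_left hS2 (by linarith)
      _ ≤ ((p * (p - 1) * 2 ^ p + p) * (1 + C₀ ^ (p - 2))) * m ^ p := by
          nlinarith [mul_nonneg (mul_nonneg (mul_nonneg (by linarith : (0:ℝ) ≤ p)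
              (by linarith : (0:ℝ) ≤ p - 1)) h2p.le) hmp,
            mul_nonneg (mul_nonneg (mul_nonneg (mul_nonneg (by linarith : (0:ℝ) ≤ p)
              (by linarith : (0:ℝ) ≤ p - 1)) h2p.le) hC₀p.le) hmp,
            mul_nonneg (mul_nonneg (by linarith : (0:ℝ) ≤ p) hC₀p.le) hmp]


/-- The weighted norm `‖φ‖* = sup_{|x|≤1} |x|^σ |φ(x)| + sup_{|x|≥1} |x|^{2/(p-1)} |φ(x)|`
(valued in `ℝ≥0∞`). -/
noncomputable def normStar (n : ℕ) (p σ : ℝ) (φ : EuclideanSpace ℝ (Fin n) → ℝ) : ℝ≥0∞ :=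
  (⨆ x : {x : EuclideanSpace ℝ (Fin n) // ‖x‖ ≤ 1}, ENNReal.ofReal (‖x.1‖ ^ σ * |φ x.1|)) +
  ⨆ x : {x : EuclideanSpace ℝ (Fin n) // 1 ≤ ‖x‖}, ENNReal.ofReal (‖x.1‖ ^ (2 / (p - 1)) * |φ x.1|)

/-- The weighted norm
`‖h‖** = sup_{|x|≤1} |x|^{2+σ} |h(x)| + sup_{|x|≥1} |x|^{2+2/(p-1)} |h(x)|`
(valued in `ℝ≥0∞`). -/
noncomputable def normStarStar (n : ℕ) (p σ : ℝ) (h : EuclideanSpace ℝ (Fin n) → ℝ) : ℝ≥0∞ :=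
  (⨆ x : {x : EuclideanSpace ℝ (Fin n) // ‖x‖ ≤ 1},
    ENNReal.ofReal (‖x.1‖ ^ (2 + σ) * |h x.1|)) +
  ⨆ x : {x : EuclideanSpace ℝ (Fin n) // 1 ≤ ‖x‖},
    ENNReal.ofReal (‖x.1‖ ^ (2 + 2 / (p - 1)) * |h x.1|)

lemma my_normStar_ptwise (n : ℕ) (p : ℝ) (φ : EuclideanSpace ℝ (Fin n) → ℝ)
    (x : EuclideanSpace ℝ (Fin n)) :
    ENNReal.ofReal (‖x‖ ^ (2 / (p - 1)) * |φ x|) ≤ normStar n p (2 / (p - 1)) φ := by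
  unfold normStar
  rcases le_total ‖x‖ 1 with h | h
  · exact le_trans (le_iSup_of_le (⟨x, h⟩ : {y : EuclideanSpace ℝ (Fin n) // ‖y‖ ≤ 1}) le_rfl)
      le_self_add
  · exact le_trans (le_iSup_of_le (⟨x, h⟩ : {y : EuclideanSpace ℝ (Fin n) // 1 ≤ ‖y‖}) le_rfl)
      le_add_self

lemma my_normStarStar_le (n : ℕ) (p B : ℝ) (hB : 0 ≤ B)
    (h : EuclideanSpace ℝ (Fin n) → ℝ)
    (hbd : ∀ x : EuclideanSpace ℝ (Fin n), ‖x‖ ^ (2 + 2 / (p - 1)) * |h x| ≤ B) :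
    normStarStar n p (2 / (p - 1)) h ≤ ENNReal.ofReal (2 * B) := by
  unfold normStarStar
  have e1 : (⨆ x : {x : EuclideanSpace ℝ (Fin n) // ‖x‖ ≤ 1},
      ENNReal.ofReal (‖x.1‖ ^ (2 + 2 / (p - 1)) * |h x.1|)) ≤ ENNReal.ofReal B :=
    iSup_le fun y => ENNReal.ofReal_le_ofReal (hbd y.1)
  have e2 : (⨆ x : {x : EuclideanSpace ℝ (Fin n) // 1 ≤ ‖x‖},
      ENNReal.ofReal (‖x.1‖ ^ (2 + 2 / (p - 1)) * |h x.1|)) ≤ ENNReal.ofReal B :=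
    iSup_le fun y => ENNReal.ofReal_le_ofReal (hbd y.1)
  calc _ ≤ ENNReal.ofReal B + ENNReal.ofReal B := add_le_add e1 e2
    _ = ENNReal.ofReal (2 * B) := by rw [← ENNReal.ofReal_add hB hB, two_mul]

/-- for `n ≥ 3`, `p > (n+2)/(n-2)`, `σ = 2/(p-1)`, and
`0 < w(x) ≤ C₀(1+|x|)^{-2/(p-1)}`, with `N(φ) = -(w+φ)ᵖ + wᵖ + p w^{p-1} φ`, there is
`C > 0` such that for every `φ` with `w + φ ≥ 0` and `‖φ‖* < ∞`:
`‖N(φ)‖** ≤ C(‖φ‖*² + ‖φ‖*ᵖ)` if `p ≥ 2`, `‖N(φ)‖** ≤ C ‖φ‖*ᵖ` if `1 < p < 2`, and in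
either case `‖N(φ)‖** ≤ C(‖φ‖*² + ‖φ‖*ᵖ)`. -/
theorem nonlinear_term_estimate
    (n : ℕ) (hn : 3 ≤ n) (p : ℝ) (hp : ((n : ℝ) + 2) / ((n : ℝ) - 2) < p)
    (C₀ : ℝ) (hC₀ : 0 < C₀)
    (w : EuclideanSpace ℝ (Fin n) → ℝ)
    (hw : ∀ x, 0 < w x ∧ w x ≤ C₀ * (1 + ‖x‖) ^ (-(2 / (p - 1)))) :
    ∃ C : ℝ, 0 < C ∧
      ∀ φ : EuclideanSpace ℝ (Fin n) → ℝ,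
        (∀ x, 0 ≤ w x + φ x) → normStar n p (2 / (p - 1)) φ < ⊤ →
        (2 ≤ p →
          normStarStar n p (2 / (p - 1))
              (fun x => -(w x + φ x) ^ p + w x ^ p + p * w x ^ (p - 1) * φ x)
            ≤ ENNReal.ofReal C * (normStar n p (2 / (p - 1)) φ ^ (2 : ℕ)
                + normStar n p (2 / (p - 1)) φ ^ p)) ∧
        (p < 2 →
          normStarStar n p (2 / (p - 1))
              (fun x => -(w x + φ x) ^ p + w x ^ p + p * w x ^ (p - 1) * φ x)
            ≤ ENNReal.ofReal C * normStar n p (2 / (p - 1)) φ ^ p) ∧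
        normStarStar n p (2 / (p - 1))
            (fun x => -(w x + φ x) ^ p + w x ^ p + p * w x ^ (p - 1) * φ x)
          ≤ ENNReal.ofReal C * (normStar n p (2 / (p - 1)) φ ^ (2 : ℕ)
              + normStar n p (2 / (p - 1)) φ ^ p) := by
  have hn3 : (3:ℝ) ≤ (n:ℝ) := by exact_mod_cast hn
  have h1p : 1 < p := by
    have h2n : (0:ℝ) < (n:ℝ) - 2 := by linarith
    have : (1:ℝ) < ((n:ℝ) + 2) / ((n:ℝ) - 2) := (one_lt_div h2n).2 (by linarith)
    linarith
  have hp1 : (0:ℝ) < p - 1 := by linarith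
  have h2p : (0:ℝ) < 2 ^ p := Real.rpow_pos_of_pos (by norm_num) p
  have hC₀p : (0:ℝ) < C₀ ^ (p - 2) := Real.rpow_pos_of_pos hC₀ _
  set C₁ : ℝ := (p * (p - 1) * 2 ^ p + p) * (1 + C₀ ^ (p - 2)) with hC₁def
  have hC₁ : 0 < C₁ := by
    apply _root_.mul_pos
    · have := _root_.mul_pos (_root_.mul_pos (by linarith : (0:ℝ) < p) hp1) h2p
      linarith
    · linarith
  refine ⟨2 * C₁, by linarith, ?_⟩
  intro φ hφw hφfin
  set F : EuclideanSpace ℝ (Fin n) → ℝ :=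
    fun x => -(w x + φ x) ^ p + w x ^ p + p * w x ^ (p - 1) * φ x with hFdef
  set M : ℝ≥0∞ := normStar n p (2 / (p - 1)) φ with hMdef
  have hMne : M ≠ ⊤ := hφfin.ne
  set m : ℝ := M.toReal with hmdef
  have hm : 0 ≤ m := ENNReal.toReal_nonneg
  have hmp : (0:ℝ) ≤ m ^ p := Real.rpow_nonneg hm p
  -- pointwise bound on φ
  have hφb : ∀ x : EuclideanSpace ℝ (Fin n), x ≠ 0 → |φ x| ≤ m * ‖x‖ ^ (-(2 / (p - 1))) := by
    intro x hx
    have hr : 0 < ‖x‖ := norm_pos_iff.2 hx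
    have hrσ : 0 < ‖x‖ ^ (2 / (p - 1)) := Real.rpow_pos_of_pos hr _
    have h1 : ‖x‖ ^ (2 / (p - 1)) * |φ x| ≤ m :=
      (ENNReal.ofReal_le_iff_le_toReal hMne).1 (my_normStar_ptwise n p φ x)
    rw [Real.rpow_neg hr.le]
    have h2 : |φ x| = (‖x‖ ^ (2 / (p - 1)) * |φ x|) * (‖x‖ ^ (2 / (p - 1)))⁻¹ := by
      field_simp
    rw [h2]
    exact mul_le_mul_of_nonneg_right h1 (inv_nonneg.2 hrσ.le)
  -- |F x| as the nonnegative quantity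
  have hFabs : ∀ x, |F x| = (w x + φ x) ^ p - w x ^ p - p * w x ^ (p - 1) * φ x := by
    intro x
    have hN0 : 0 ≤ (w x + φ x) ^ p - w x ^ p - p * w x ^ (p - 1) * φ x := by
      have := my_bernoulli_shift h1p.le (hw x).1 (hφw x)
      linarith
    have hFe : F x = -((w x + φ x) ^ p - w x ^ p - p * w x ^ (p - 1) * φ x) := by
      rw [hFdef]; ring
    rw [hFe, abs_neg, abs_of_nonneg hN0]
  -- weighted pointwise bounds
  have main2 : 2 ≤ p → ∀ x : EuclideanSpace ℝ (Fin n),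
      ‖x‖ ^ (2 + 2 / (p - 1)) * |F x| ≤ C₁ * (m ^ 2 + m ^ p) := by
    intro hp2 x
    rcases eq_or_ne x 0 with rfl | hx
    · rw [norm_zero, Real.zero_rpow (by positivity : 2 + 2 / (p - 1) ≠ 0), zero_mul]
      have h0 : 0 ≤ m ^ 2 + m ^ p := add_nonneg (sq_nonneg m) hmp
      exact mul_nonneg hC₁.le h0
    · have hr : 0 < ‖x‖ := norm_pos_iff.2 hx
      rw [hFabs x]
      exact (my_main_pt h1p hC₀ (hw x).1 (hw x).2 (hφw x) hr hm (hφb x hx)).1 hp2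
  have main1 : p ≤ 2 → ∀ x : EuclideanSpace ℝ (Fin n),
      ‖x‖ ^ (2 + 2 / (p - 1)) * |F x| ≤ C₁ * m ^ p := by
    intro hp2 x
    rcases eq_or_ne x 0 with rfl | hx
    · rw [norm_zero, Real.zero_rpow (by positivity : 2 + 2 / (p - 1) ≠ 0), zero_mul]
      exact mul_nonneg hC₁.le hmp
    · have hr : 0 < ‖x‖ := norm_pos_iff.2 hx
      rw [hFabs x]
      exact (my_main_pt h1p hC₀ (hw x).1 (hw x).2 (hφw x) hr hm (hφb x hx)).2 hp2
  -- ENNReal conversions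
  have hMrepr : ENNReal.ofReal m = M := ENNReal.ofReal_toReal hMne
  have conv2 : ENNReal.ofReal (2 * (C₁ * (m ^ 2 + m ^ p)))
      = ENNReal.ofReal (2 * C₁) * (M ^ (2 : ℕ) + M ^ p) := by
    have e0 : 2 * (C₁ * (m ^ 2 + m ^ p)) = (2 * C₁) * (m ^ 2 + m ^ p) := by ring
    rw [e0, ENNReal.ofReal_mul (by linarith : (0:ℝ) ≤ 2 * C₁),
      ENNReal.ofReal_add (sq_nonneg m) hmp, ENNReal.ofReal_pow hm,
      ← ENNReal.ofReal_rpow_of_nonneg hm (by linarith : (0:ℝ) ≤ p), hMrepr]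
  have conv1 : ENNReal.ofReal (2 * (C₁ * m ^ p)) = ENNReal.ofReal (2 * C₁) * M ^ p := by
    have e0 : 2 * (C₁ * m ^ p) = (2 * C₁) * m ^ p := by ring
    rw [e0, ENNReal.ofReal_mul (by linarith : (0:ℝ) ≤ 2 * C₁),
      ← ENNReal.ofReal_rpow_of_nonneg hm (by linarith : (0:ℝ) ≤ p), hMrepr]
  have goal2 : 2 ≤ p → normStarStar n p (2 / (p - 1)) F
      ≤ ENNReal.ofReal (2 * C₁) * (M ^ (2 : ℕ) + M ^ p) := by
    intro hp2
    have hB : 0 ≤ C₁ * (m ^ 2 + m ^ p) :=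
      mul_nonneg hC₁.le (add_nonneg (sq_nonneg m) hmp)
    calc normStarStar n p (2 / (p - 1)) F
        ≤ ENNReal.ofReal (2 * (C₁ * (m ^ 2 + m ^ p))) :=
          my_normStarStar_le n p _ hB F (main2 hp2)
      _ = ENNReal.ofReal (2 * C₁) * (M ^ (2 : ℕ) + M ^ p) := conv2
  have goal1 : p ≤ 2 → normStarStar n p (2 / (p - 1)) F
      ≤ ENNReal.ofReal (2 * C₁) * M ^ p := by
    intro hp2
    have hB : 0 ≤ C₁ * m ^ p := mul_nonneg hC₁.le hmp
    calc normStarStar n p (2 / (p - 1)) F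
        ≤ ENNReal.ofReal (2 * (C₁ * m ^ p)) := my_normStarStar_le n p _ hB F (main1 hp2)
      _ = ENNReal.ofReal (2 * C₁) * M ^ p := conv1
  refine ⟨goal2, fun hlt => goal1 hlt.le, ?_⟩
  rcases le_or_gt 2 p with h | h
  · exact goal2 h
  · exact (goal1 h.le).trans (mul_le_mul_right le_add_self _)
end

section
/- Let n ≥ 3, p ≥ 2 with p > (n+2)/(n-2), σ = 2/(p-1), and let w : ℝⁿ → ℝ satisfy 0 < w(x) ≤ C₀ (1+|x|)^{-2/(p-1)}. Define N(φ) = −(w+φ)^p + w^p + p w^{p-1} φ. Then there is a constant C > 0 such that for every ρ ∈ (0,1) and all functions φ₁, φ₂ on ℝⁿ with w + φᵢ ≥ 0 and ‖φᵢ‖* ≤ ρ (i = 1,2), one has ‖N(φ₁) − N(φ₂)‖** ≤ C (ρ + ρ^{p-1}) ‖φ₁ − φ₂‖*. -/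
open Set Filter Topology ENNReal

private lemma mvt_rpow (p : ℝ) (hp : 1 ≤ p) (a b : ℝ) :
    ∃ ξ, min a b ≤ ξ ∧ ξ ≤ max a b ∧ a ^ p - b ^ p = p * ξ ^ (p - 1) * (a - b) := by
  have hderiv : ∀ x : ℝ, HasDerivAt (fun y : ℝ => y ^ p) (p * x ^ (p - 1)) x :=
    fun x => Real.hasDerivAt_rpow_const (Or.inr hp)
  have hcont : Continuous fun y : ℝ => y ^ p :=
    continuous_iff_continuousAt.mpr fun x => (hderiv x).continuousAt
  rcases lt_trichotomy a b with h | h | h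
  · obtain ⟨c, hc, hc'⟩ := exists_hasDerivAt_eq_slope (fun y => y ^ p)
      (fun y => p * y ^ (p - 1)) h hcont.continuousOn (fun y _ => hderiv y)
    have hab : b - a ≠ 0 := by linarith
    refine ⟨c, (min_le_left a b).trans hc.1.le, hc.2.le.trans (le_max_right a b), ?_⟩
    linear_combination (eq_div_iff hab).mp hc'
  · subst h
    exact ⟨a, (min_self a).le, (max_self a).ge, by ring⟩
  · obtain ⟨c, hc, hc'⟩ := exists_hasDerivAt_eq_slope (fun y => y ^ p)
      (fun y => p * y ^ (p - 1)) h hcont.continuousOn (fun y _ => hderiv y)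
    have hab : a - b ≠ 0 := by linarith
    refine ⟨c, (min_le_right a b).trans hc.1.le, hc.2.le.trans (le_max_left a b), ?_⟩
    linear_combination -((eq_div_iff hab).mp hc')

private lemma abs_rpow_sub_rpow (q : ℝ) (hq : 1 ≤ q) {s t : ℝ} (hs : 0 ≤ s) (ht : 0 ≤ t) :
    |s ^ q - t ^ q| ≤ q * (max s t) ^ (q - 1) * |s - t| := by
  obtain ⟨ξ, h1, h2, h3⟩ := mvt_rpow q hq s t
  have hξ0 : 0 ≤ ξ := (le_min hs ht).trans h1
  have hmax0 : 0 ≤ max s t := hs.trans (le_max_left s t)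
  rw [h3, abs_mul, abs_mul, abs_of_nonneg (by linarith : (0:ℝ) ≤ q),
    abs_of_nonneg (Real.rpow_nonneg hξ0 _)]
  have := Real.rpow_le_rpow hξ0 h2 (by linarith : (0:ℝ) ≤ q - 1)
  have habs : (0:ℝ) ≤ |s - t| := abs_nonneg _
  exact mul_le_mul_of_nonneg_right
    (mul_le_mul_of_nonneg_left this (by linarith : (0:ℝ) ≤ q)) habs

set_option maxHeartbeats 1000000 in
private lemma pointwise_bound (p : ℝ) (hp2 : 2 ≤ p) (C₀ : ℝ) (hC₀ : 0 < C₀)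
    (ρ r W A B : ℝ) (hρ : 0 < ρ) (hr : 0 < r)
    (hW0 : 0 < W) (hW : W ≤ C₀ * (1 + r) ^ (-(2 / (p - 1))))
    (hA0 : 0 ≤ W + A) (hB0 : 0 ≤ W + B)
    (hA : |A| ≤ ρ * r ^ (-(2 / (p - 1)))) (hB : |B| ≤ ρ * r ^ (-(2 / (p - 1)))) :
    r ^ (2 + 2 / (p - 1)) *
      |(-(W + A) ^ p + W ^ p + p * W ^ (p - 1) * A)
        - (-(W + B) ^ p + W ^ p + p * W ^ (p - 1) * B)|
    ≤ (p * (p - 1) * 2 ^ (p - 2) * (C₀ ^ (p - 2) + 1)) * (ρ + ρ ^ (p - 1))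
        * (r ^ (2 / (p - 1)) * |A - B|) := by
  have hp1 : (1:ℝ) ≤ p - 1 := by linarith
  have hp1ne : p - 1 ≠ 0 := by linarith
  have hσpos : (0:ℝ) < 2 / (p - 1) := by positivity
  have hσ2 : 2 / (p - 1) ≤ 2 := by
    rw [div_le_iff₀ (by linarith : (0:ℝ) < p - 1)]; nlinarith
  set σ : ℝ := 2 / (p - 1) with hσ
  -- MVT point
  obtain ⟨ξ, hmin, hmax, hξ⟩ := mvt_rpow p (by linarith) (W + A) (W + B)
  have hξ0 : 0 ≤ ξ := (le_min hA0 hB0).trans hmin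
  set m : ℝ := max |A| |B| with hm
  have hm0 : 0 ≤ m := (abs_nonneg A).trans (le_max_left _ _)
  have hmρ : m ≤ ρ * r ^ (-σ) := max_le hA hB
  -- |ξ - W| ≤ m and max ξ W ≤ W + m
  have hξub : ξ ≤ W + m := hmax.trans (max_le
    (by have := le_abs_self A; have := le_max_left |A| |B|; linarith)
    (by have := le_abs_self B; have := le_max_right |A| |B|; linarith))
  have hξlb : W - m ≤ ξ := le_trans (le_min
    (by have := neg_abs_le A; have := le_max_left |A| |B|; linarith)
    (by have := neg_abs_le B; have := le_max_right |A| |B|; linarith)) hmin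
  have hξW : |ξ - W| ≤ m := abs_le.mpr ⟨by linarith, by linarith⟩
  -- rewrite the difference
  have hE : (-(W + A) ^ p + W ^ p + p * W ^ (p - 1) * A)
        - (-(W + B) ^ p + W ^ p + p * W ^ (p - 1) * B)
      = p * (W ^ (p - 1) - ξ ^ (p - 1)) * (A - B) := by
    linear_combination -hξ
  -- bound |ξ^{p-1} - W^{p-1}|
  have hBnd : |W ^ (p - 1) - ξ ^ (p - 1)|
      ≤ (p - 1) * (2 ^ (p - 2) * (W ^ (p - 2) + m ^ (p - 2))) * m := by
    rw [abs_sub_comm]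
    have h1 := abs_rpow_sub_rpow (p - 1) hp1 hξ0 hW0.le
    have hexp : p - 1 - 1 = p - 2 := by ring
    rw [hexp] at h1
    have hmaxle : max ξ W ≤ W + m := max_le hξub (by linarith)
    have hmax0 : (0:ℝ) ≤ max ξ W := hξ0.trans (le_max_left _ _)
    have h2 : (max ξ W) ^ (p - 2) ≤ (W + m) ^ (p - 2) :=
      Real.rpow_le_rpow hmax0 hmaxle (by linarith)
    have h3 : (W + m) ^ (p - 2) ≤ 2 ^ (p - 2) * (W ^ (p - 2) + m ^ (p - 2)) := by
      have hWm : W + m ≤ 2 * max W m := by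
        rcases max_cases W m with ⟨he, hle⟩ | ⟨he, hle⟩ <;> rw [he] <;> linarith
      have h4 : (W + m) ^ (p - 2) ≤ (2 * max W m) ^ (p - 2) :=
        Real.rpow_le_rpow (by linarith) hWm (by linarith)
      have h5 : (2 * max W m) ^ (p - 2) = 2 ^ (p - 2) * (max W m) ^ (p - 2) :=
        Real.mul_rpow (by norm_num) (le_max_of_le_left hW0.le)
      have h6 : (max W m) ^ (p - 2) ≤ W ^ (p - 2) + m ^ (p - 2) := by
        rcases max_cases W m with ⟨he, hle⟩ | ⟨he, hle⟩ <;> rw [he]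
        · linarith [Real.rpow_nonneg hm0 (p - 2)]
        · linarith [Real.rpow_nonneg hW0.le (p - 2)]
      calc (W + m) ^ (p - 2) ≤ 2 ^ (p - 2) * (max W m) ^ (p - 2) := by rw [← h5]; exact h4
        _ ≤ 2 ^ (p - 2) * (W ^ (p - 2) + m ^ (p - 2)) := by
            exact mul_le_mul_of_nonneg_left h6 (Real.rpow_nonneg (by norm_num) _)
    calc |ξ ^ (p - 1) - W ^ (p - 1)| ≤ (p - 1) * (max ξ W) ^ (p - 2) * |ξ - W| := h1
      _ ≤ (p - 1) * (2 ^ (p - 2) * (W ^ (p - 2) + m ^ (p - 2))) * m := by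
          have hq0 : (0:ℝ) ≤ p - 1 := by linarith
          have hnn : (0:ℝ) ≤ (p - 1) * (max ξ W) ^ (p - 2) :=
            mul_nonneg hq0 (Real.rpow_nonneg hmax0 _)
          exact mul_le_mul (mul_le_mul_of_nonneg_left (h2.trans h3) hq0) hξW
            (abs_nonneg _) (mul_nonneg hq0 (mul_nonneg
              (Real.rpow_nonneg (by norm_num) _)
              (add_nonneg (Real.rpow_nonneg hW0.le _) (Real.rpow_nonneg hm0 _))))
  -- weighted claims
  have h1r : (0:ℝ) < 1 + r := by linarith
  have hexp1 : (-σ) * (p - 2) = σ - 2 := by rw [hσ]; field_simp; ring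
  have hWp : W ^ (p - 2) ≤ C₀ ^ (p - 2) * (1 + r) ^ (σ - 2) := by
    have h1 : W ^ (p - 2) ≤ (C₀ * (1 + r) ^ (-σ)) ^ (p - 2) :=
      Real.rpow_le_rpow hW0.le hW (by linarith)
    have h2 : (C₀ * (1 + r) ^ (-σ)) ^ (p - 2)
        = C₀ ^ (p - 2) * (1 + r) ^ (σ - 2) := by
      rw [Real.mul_rpow hC₀.le (Real.rpow_nonneg h1r.le _),
        ← Real.rpow_mul h1r.le, hexp1]
    linarith [h2 ▸ h1]
  have claim1 : r ^ (2 + σ) * (W ^ (p - 2) * m) ≤ C₀ ^ (p - 2) * ρ * r ^ σ := by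
    have hCp : (0:ℝ) ≤ C₀ ^ (p - 2) := Real.rpow_nonneg hC₀.le _
    have step : W ^ (p - 2) * m ≤ (C₀ ^ (p - 2) * (1 + r) ^ (σ - 2)) * (ρ * r ^ (-σ)) := by
      have := Real.rpow_nonneg hW0.le (p - 2)
      have := Real.rpow_nonneg h1r.le (σ - 2)
      nlinarith
    have key : r ^ (2 + σ) * ((C₀ ^ (p - 2) * (1 + r) ^ (σ - 2)) * (ρ * r ^ (-σ)))
        ≤ C₀ ^ (p - 2) * ρ * r ^ σ := by
      have e1 : r ^ (2 + σ) * r ^ (-σ) = r ^ (2:ℝ) := by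
        rw [← Real.rpow_add hr]; norm_num
      have e2 : r ^ (2:ℝ) * (1 + r) ^ (σ - 2) ≤ r ^ σ := by
        have e3 : (1 + r) ^ (σ - 2) = ((1 + r) ^ (2 - σ))⁻¹ := by
          rw [show σ - 2 = -(2 - σ) by ring, Real.rpow_neg h1r.le]
        rw [e3, ← div_eq_mul_inv, div_le_iff₀ (Real.rpow_pos_of_pos h1r _)]
        have e4 : r ^ (2:ℝ) = r ^ σ * r ^ (2 - σ) := by
          rw [← Real.rpow_add hr]; norm_num
        rw [e4]
        exact mul_le_mul_of_nonneg_left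
          (Real.rpow_le_rpow hr.le (by linarith) (by linarith)) (Real.rpow_nonneg hr.le _)
      calc r ^ (2 + σ) * ((C₀ ^ (p - 2) * (1 + r) ^ (σ - 2)) * (ρ * r ^ (-σ)))
          = (C₀ ^ (p - 2) * ρ) * ((r ^ (2 + σ) * r ^ (-σ)) * (1 + r) ^ (σ - 2)) := by ring
        _ = (C₀ ^ (p - 2) * ρ) * (r ^ (2:ℝ) * (1 + r) ^ (σ - 2)) := by rw [e1]
        _ ≤ (C₀ ^ (p - 2) * ρ) * r ^ σ := by
            exact mul_le_mul_of_nonneg_left e2 (by positivity)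
        _ = C₀ ^ (p - 2) * ρ * r ^ σ := by ring
    calc r ^ (2 + σ) * (W ^ (p - 2) * m)
        ≤ r ^ (2 + σ) * ((C₀ ^ (p - 2) * (1 + r) ^ (σ - 2)) * (ρ * r ^ (-σ))) :=
          mul_le_mul_of_nonneg_left step (Real.rpow_nonneg hr.le _)
      _ ≤ C₀ ^ (p - 2) * ρ * r ^ σ := key
  have claim2 : r ^ (2 + σ) * (m ^ (p - 2) * m) ≤ ρ ^ (p - 1) * r ^ σ := by
    have hx : (0:ℝ) < ρ * r ^ (-σ) := by positivity
    have step : m ^ (p - 2) * m ≤ (ρ * r ^ (-σ)) ^ (p - 2) * (ρ * r ^ (-σ)) := by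
      have h1 : m ^ (p - 2) ≤ (ρ * r ^ (-σ)) ^ (p - 2) :=
        Real.rpow_le_rpow hm0 hmρ (by linarith)
      have := Real.rpow_nonneg hm0 (p - 2)
      nlinarith
    have e1 : (ρ * r ^ (-σ)) ^ (p - 2) * (ρ * r ^ (-σ)) = (ρ * r ^ (-σ)) ^ (p - 1) := by
      nth_rewrite 2 [show ρ * r ^ (-σ) = (ρ * r ^ (-σ)) ^ (1:ℝ) by rw [Real.rpow_one]]
      rw [← Real.rpow_add hx]; congr 1; ring
    have e2 : (ρ * r ^ (-σ)) ^ (p - 1) = ρ ^ (p - 1) * r ^ (-(2:ℝ)) := by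
      have hexp2 : (-σ) * (p - 1) = -2 := by rw [hσ]; field_simp
      rw [Real.mul_rpow hρ.le (Real.rpow_nonneg hr.le _), ← Real.rpow_mul hr.le, hexp2]
    have e3 : r ^ (2 + σ) * r ^ (-(2:ℝ)) = r ^ σ := by
      rw [← Real.rpow_add hr]; ring_nf
    calc r ^ (2 + σ) * (m ^ (p - 2) * m)
        ≤ r ^ (2 + σ) * ((ρ * r ^ (-σ)) ^ (p - 2) * (ρ * r ^ (-σ))) :=
          mul_le_mul_of_nonneg_left step (Real.rpow_nonneg hr.le _)
      _ = r ^ (2 + σ) * (ρ ^ (p - 1) * r ^ (-(2:ℝ))) := by rw [e1, e2]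
      _ = ρ ^ (p - 1) * (r ^ (2 + σ) * r ^ (-(2:ℝ))) := by ring
      _ = ρ ^ (p - 1) * r ^ σ := by rw [e3]
  -- assemble
  have hQ0 : (0:ℝ) < p * (p - 1) * 2 ^ (p - 2) :=
    mul_pos (mul_pos (by linarith) (by linarith)) (Real.rpow_pos_of_pos (by norm_num) _)
  have hEabs : |(-(W + A) ^ p + W ^ p + p * W ^ (p - 1) * A)
        - (-(W + B) ^ p + W ^ p + p * W ^ (p - 1) * B)|
      ≤ p * ((p - 1) * (2 ^ (p - 2) * (W ^ (p - 2) + m ^ (p - 2))) * m) * |A - B| := by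
    rw [hE, abs_mul, abs_mul, abs_of_nonneg (by linarith : (0:ℝ) ≤ p)]
    exact mul_le_mul_of_nonneg_right
      (mul_le_mul_of_nonneg_left hBnd (by linarith : (0:ℝ) ≤ p)) (abs_nonneg _)
  have hw1 : r ^ (2 + σ) * (W ^ (p - 2) * m + m ^ (p - 2) * m)
      ≤ (C₀ ^ (p - 2) * ρ + ρ ^ (p - 1)) * r ^ σ := by
    calc r ^ (2 + σ) * (W ^ (p - 2) * m + m ^ (p - 2) * m)
        = r ^ (2 + σ) * (W ^ (p - 2) * m) + r ^ (2 + σ) * (m ^ (p - 2) * m) := by ring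
      _ ≤ C₀ ^ (p - 2) * ρ * r ^ σ + ρ ^ (p - 1) * r ^ σ := add_le_add claim1 claim2
      _ = (C₀ ^ (p - 2) * ρ + ρ ^ (p - 1)) * r ^ σ := by ring
  have hρp : (0:ℝ) < ρ ^ (p - 1) := Real.rpow_pos_of_pos hρ _
  have hCp : (0:ℝ) ≤ C₀ ^ (p - 2) := Real.rpow_nonneg hC₀.le _
  have hfinal : (C₀ ^ (p - 2) * ρ + ρ ^ (p - 1)) ≤ (C₀ ^ (p - 2) + 1) * (ρ + ρ ^ (p - 1)) := by
    nlinarith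
  calc r ^ (2 + σ) *
      |(-(W + A) ^ p + W ^ p + p * W ^ (p - 1) * A)
        - (-(W + B) ^ p + W ^ p + p * W ^ (p - 1) * B)|
      ≤ r ^ (2 + σ) * (p * ((p - 1) * (2 ^ (p - 2) * (W ^ (p - 2) + m ^ (p - 2))) * m) * |A - B|) :=
        mul_le_mul_of_nonneg_left hEabs (Real.rpow_nonneg hr.le _)
    _ = (p * (p - 1) * 2 ^ (p - 2)) * (r ^ (2 + σ) * (W ^ (p - 2) * m + m ^ (p - 2) * m)) * |A - B| := by
        ring
    _ ≤ (p * (p - 1) * 2 ^ (p - 2)) * ((C₀ ^ (p - 2) * ρ + ρ ^ (p - 1)) * r ^ σ) * |A - B| := by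
        exact mul_le_mul_of_nonneg_right
          (mul_le_mul_of_nonneg_left hw1 hQ0.le) (abs_nonneg _)
    _ ≤ (p * (p - 1) * 2 ^ (p - 2)) * ((C₀ ^ (p - 2) + 1) * (ρ + ρ ^ (p - 1)) * r ^ σ) * |A - B| := by
        have h1 : (C₀ ^ (p - 2) * ρ + ρ ^ (p - 1)) * r ^ σ
            ≤ (C₀ ^ (p - 2) + 1) * (ρ + ρ ^ (p - 1)) * r ^ σ :=
          mul_le_mul_of_nonneg_right hfinal (Real.rpow_nonneg hr.le _)
        exact mul_le_mul_of_nonneg_right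
          (mul_le_mul_of_nonneg_left h1 hQ0.le) (abs_nonneg _)
    _ = (p * (p - 1) * 2 ^ (p - 2) * (C₀ ^ (p - 2) + 1)) * (ρ + ρ ^ (p - 1))
        * (r ^ σ * |A - B|) := by ring

/-- for `n ≥ 3`, `p ≥ 2` with `p > (n+2)/(n-2)`, `σ = 2/(p-1)`, and
`0 < w(x) ≤ C₀(1+|x|)^{-2/(p-1)}`, with `N(φ) = -(w+φ)ᵖ + wᵖ + p w^{p-1} φ`, there is
`C > 0` such that for every `ρ ∈ (0,1)` and all `φ₁, φ₂` with `w + φᵢ ≥ 0` and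
`‖φᵢ‖* ≤ ρ`, one has `‖N(φ₁) - N(φ₂)‖** ≤ C (ρ + ρ^{p-1}) ‖φ₁ - φ₂‖*`. -/
theorem nonlinear_term_lipschitz
    (n : ℕ) (hn : 3 ≤ n) (p : ℝ) (hp2 : 2 ≤ p)
    (hp : ((n : ℝ) + 2) / ((n : ℝ) - 2) < p)
    (C₀ : ℝ) (hC₀ : 0 < C₀)
    (w : EuclideanSpace ℝ (Fin n) → ℝ)
    (hw : ∀ x, 0 < w x ∧ w x ≤ C₀ * (1 + ‖x‖) ^ (-(2 / (p - 1)))) :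
    ∃ C : ℝ, 0 < C ∧
      ∀ ρ : ℝ, ρ ∈ Ioo (0 : ℝ) 1 →
        ∀ φ₁ φ₂ : EuclideanSpace ℝ (Fin n) → ℝ,
          (∀ x, 0 ≤ w x + φ₁ x) → (∀ x, 0 ≤ w x + φ₂ x) →
          normStar n p (2 / (p - 1)) φ₁ ≤ ENNReal.ofReal ρ →
          normStar n p (2 / (p - 1)) φ₂ ≤ ENNReal.ofReal ρ →
          normStarStar n p (2 / (p - 1))
              (fun x => (-(w x + φ₁ x) ^ p + w x ^ p + p * w x ^ (p - 1) * φ₁ x)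
                - (-(w x + φ₂ x) ^ p + w x ^ p + p * w x ^ (p - 1) * φ₂ x))
            ≤ ENNReal.ofReal (C * (ρ + ρ ^ (p - 1)))
              * normStar n p (2 / (p - 1)) (fun x => φ₁ x - φ₂ x) := by
  have hp1pos : (0:ℝ) < p - 1 := by linarith
  have hσpos : (0:ℝ) < 2 / (p - 1) := by positivity
  set K : ℝ := p * (p - 1) * 2 ^ (p - 2) * (C₀ ^ (p - 2) + 1) with hK
  have hK0 : 0 < K :=
    mul_pos (mul_pos (mul_pos (by linarith) hp1pos)
      (Real.rpow_pos_of_pos (by norm_num) _))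
      (by positivity)
  refine ⟨2 * K, by positivity, ?_⟩
  intro ρ hρ φ₁ φ₂ hpos1 hpos2 hn1 hn2
  obtain ⟨hρ0, hρ1⟩ := hρ
  have hρp : (0:ℝ) < ρ ^ (p - 1) := Real.rpow_pos_of_pos hρ0 _
  -- pointwise bound extraction from normStar
  have hpt : ∀ φ : EuclideanSpace ℝ (Fin n) → ℝ,
      normStar n p (2 / (p - 1)) φ ≤ ENNReal.ofReal ρ →
      ∀ x : EuclideanSpace ℝ (Fin n), 0 < ‖x‖ → |φ x| ≤ ρ * ‖x‖ ^ (-(2 / (p - 1))) := by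
    intro φ hφ x hx
    simp only [normStar] at hφ
    have hxσ : 0 < ‖x‖ ^ (2 / (p - 1)) := Real.rpow_pos_of_pos hx _
    have main : ‖x‖ ^ (2 / (p - 1)) * |φ x| ≤ ρ := by
      rcases le_total ‖x‖ 1 with h1 | h1
      · have h2 : ENNReal.ofReal (‖x‖ ^ (2 / (p - 1)) * |φ x|)
            ≤ (⨆ y : {x : EuclideanSpace ℝ (Fin n) // ‖x‖ ≤ 1}, ENNReal.ofReal (‖y.1‖ ^ (2 / (p - 1)) * |φ y.1|)) + (⨆ y : {x : EuclideanSpace ℝ (Fin n) // 1 ≤ ‖x‖}, ENNReal.ofReal (‖y.1‖ ^ (2 / (p - 1)) * |φ y.1|)) :=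
          le_trans (le_iSup (fun y : {x : EuclideanSpace ℝ (Fin n) // ‖x‖ ≤ 1} => ENNReal.ofReal (‖y.1‖ ^ (2 / (p - 1)) * |φ y.1|)) ⟨x, h1⟩) le_self_add
        exact (ENNReal.ofReal_le_ofReal_iff hρ0.le).mp (h2.trans hφ)
      · have h2 : ENNReal.ofReal (‖x‖ ^ (2 / (p - 1)) * |φ x|)
            ≤ (⨆ y : {x : EuclideanSpace ℝ (Fin n) // ‖x‖ ≤ 1}, ENNReal.ofReal (‖y.1‖ ^ (2 / (p - 1)) * |φ y.1|)) + (⨆ y : {x : EuclideanSpace ℝ (Fin n) // 1 ≤ ‖x‖}, ENNReal.ofReal (‖y.1‖ ^ (2 / (p - 1)) * |φ y.1|)) :=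
          le_trans (le_iSup (fun y : {x : EuclideanSpace ℝ (Fin n) // 1 ≤ ‖x‖} => ENNReal.ofReal (‖y.1‖ ^ (2 / (p - 1)) * |φ y.1|)) ⟨x, h1⟩) le_add_self
        exact (ENNReal.ofReal_le_ofReal_iff hρ0.le).mp (h2.trans hφ)
    rw [Real.rpow_neg hx.le, ← div_eq_mul_inv, le_div_iff₀ hxσ, mul_comm]
    exact main
  set S : ℝ≥0∞ := normStar n p (2 / (p - 1)) (fun x => φ₁ x - φ₂ x) with hS
  rcases eq_or_ne S ⊤ with hStop | hSne
  · rw [hStop, ENNReal.mul_top]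
    · exact le_top
    · exact (ENNReal.ofReal_pos.mpr (mul_pos (by positivity) (by linarith))).ne'
  -- S finite
  have hΔ : ∀ x : EuclideanSpace ℝ (Fin n), 0 < ‖x‖ →
      ‖x‖ ^ (2 / (p - 1)) * |φ₁ x - φ₂ x| ≤ S.toReal := by
    intro x hx
    rw [← ENNReal.ofReal_le_iff_le_toReal hSne]
    rw [hS]; simp only [normStar]
    rcases le_total ‖x‖ 1 with h1 | h1
    · show ENNReal.ofReal (‖x‖ ^ (2 / (p - 1)) * |φ₁ x - φ₂ x|)
        ≤ (⨆ y : {x : EuclideanSpace ℝ (Fin n) // ‖x‖ ≤ 1}, ENNReal.ofReal (‖y.1‖ ^ (2 / (p - 1)) * |φ₁ y.1 - φ₂ y.1|)) + (⨆ y : {x : EuclideanSpace ℝ (Fin n) // 1 ≤ ‖x‖}, ENNReal.ofReal (‖y.1‖ ^ (2 / (p - 1)) * |φ₁ y.1 - φ₂ y.1|))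
      exact le_trans (le_iSup (fun y : {x : EuclideanSpace ℝ (Fin n) // ‖x‖ ≤ 1} => ENNReal.ofReal (‖y.1‖ ^ (2 / (p - 1)) * |φ₁ y.1 - φ₂ y.1|)) ⟨x, h1⟩) le_self_add
    · show ENNReal.ofReal (‖x‖ ^ (2 / (p - 1)) * |φ₁ x - φ₂ x|)
        ≤ (⨆ y : {x : EuclideanSpace ℝ (Fin n) // ‖x‖ ≤ 1}, ENNReal.ofReal (‖y.1‖ ^ (2 / (p - 1)) * |φ₁ y.1 - φ₂ y.1|)) + (⨆ y : {x : EuclideanSpace ℝ (Fin n) // 1 ≤ ‖x‖}, ENNReal.ofReal (‖y.1‖ ^ (2 / (p - 1)) * |φ₁ y.1 - φ₂ y.1|))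
      exact le_trans (le_iSup (fun y : {x : EuclideanSpace ℝ (Fin n) // 1 ≤ ‖x‖} => ENNReal.ofReal (‖y.1‖ ^ (2 / (p - 1)) * |φ₁ y.1 - φ₂ y.1|)) ⟨x, h1⟩) le_add_self
  set T : ℝ := K * (ρ + ρ ^ (p - 1)) * S.toReal with hT
  have hT0 : 0 ≤ T := by
    have := ENNReal.toReal_nonneg (a := S)
    have : (0:ℝ) ≤ ρ + ρ ^ (p - 1) := by linarith
    positivity
  have hbound : ∀ x : EuclideanSpace ℝ (Fin n),
      ENNReal.ofReal (‖x‖ ^ (2 + 2 / (p - 1)) *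
        |(-(w x + φ₁ x) ^ p + w x ^ p + p * w x ^ (p - 1) * φ₁ x)
          - (-(w x + φ₂ x) ^ p + w x ^ p + p * w x ^ (p - 1) * φ₂ x)|)
      ≤ ENNReal.ofReal T := by
    intro x
    rcases (norm_nonneg x).eq_or_lt with h0 | h0
    · rw [← h0, Real.zero_rpow (by positivity : (2:ℝ) + 2 / (p - 1) ≠ 0), zero_mul,
        ENNReal.ofReal_zero]
      exact zero_le
    · apply ENNReal.ofReal_le_ofReal
      have key := pointwise_bound p hp2 C₀ hC₀ ρ ‖x‖ (w x) (φ₁ x) (φ₂ x) hρ0 h0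
        (hw x).1 (hw x).2 (hpos1 x) (hpos2 x) (hpt φ₁ hn1 x h0) (hpt φ₂ hn2 x h0)
      refine key.trans ?_
      rw [hT]
      exact mul_le_mul_of_nonneg_left (hΔ x h0) (by positivity)
  have habs : ∀ x : EuclideanSpace ℝ (Fin n),
      |(fun x => (-(w x + φ₁ x) ^ p + w x ^ p + p * w x ^ (p - 1) * φ₁ x)
          - (-(w x + φ₂ x) ^ p + w x ^ p + p * w x ^ (p - 1) * φ₂ x)) x|
        = |(-(w x + φ₁ x) ^ p + w x ^ p + p * w x ^ (p - 1) * φ₁ x)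
          - (-(w x + φ₂ x) ^ p + w x ^ p + p * w x ^ (p - 1) * φ₂ x)| := fun x => rfl
  calc normStarStar n p (2 / (p - 1))
        (fun x => (-(w x + φ₁ x) ^ p + w x ^ p + p * w x ^ (p - 1) * φ₁ x)
          - (-(w x + φ₂ x) ^ p + w x ^ p + p * w x ^ (p - 1) * φ₂ x))
      ≤ ENNReal.ofReal T + ENNReal.ofReal T := by
        simp only [normStarStar]
        exact add_le_add (iSup_le fun x => hbound x.1) (iSup_le fun x => hbound x.1)
    _ = ENNReal.ofReal (2 * K * (ρ + ρ ^ (p - 1)) * S.toReal) := by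
        rw [← ENNReal.ofReal_add hT0 hT0]
        congr 1
        rw [hT]; ring
    _ = ENNReal.ofReal (2 * K * (ρ + ρ ^ (p - 1))) * ENNReal.ofReal S.toReal := by
        rw [← ENNReal.ofReal_mul (by positivity)]
    _ = ENNReal.ofReal (2 * K * (ρ + ρ ^ (p - 1))) * S := by
        rw [ENNReal.ofReal_toReal hSne]
end
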